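/- Any multiplicative polynomial map on a finite-dimensional algebra R over an infinite field F factors through R/J, where J is the Jacobson radical: a multiplicative polynomial map f satisfies f(a + j) = f(a) for all a ∈ R, j ∈ J (equivalently, the characters of R* coincide with the polynomial characters of (R/J)*). -/

import Mathlib

open TensorProduct

variable {F R ι : Type*}

/-- The polynomial function on `R` attached to a polynomial in the coordinates
along the basis `b`. -/
noncomputable def polyFun [Field F] [Ring R] [Algebra F R] [Fintype ι]
    (b : Module.Basis ι F R) (p : MvPolynomial ι F) : R → F :=
  fun r => MvPolynomial.eval (fun i => b.repr r i) p

/-- The abstract characteristic polynomial `χ_a(t) = N(t·1 - a)` of an element `a`,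
for the polynomial map attached to `p`. -/
noncomputable def charPolyOf [Field F] [Ring R] [Algebra F R] [Fintype ι]
    (b : Module.Basis ι F R) (p : MvPolynomial ι F) (a : R) : Polynomial F :=
  MvPolynomial.aeval
    (fun i => Polynomial.C (b.repr 1 i) * Polynomial.X - Polynomial.C (b.repr a i)) p

/-- `p` defines a Cayley–Hamilton norm of degree `n` on `R` (w.r.t. the basis `b`):
homogeneous of degree `n`, multiplicative, and every element satisfies its abstract
characteristic polynomial. -/
structure IsCHNorm [Field F] [Ring R] [Algebra F R] [Fintype ι]
    (b : Module.Basis ι F R) (n : ℕ) (p : MvPolynomial ι F) : Prop where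
  homog : ∀ (α : F) (r : R), polyFun b p (α • r) = α ^ n * polyFun b p r
  mult : ∀ x y : R, polyFun b p (x * y) = polyFun b p x * polyFun b p y
  ch : ∀ a : R, Polynomial.aeval a (charPolyOf b p a) = 0

/-- The generic element `x = Σ xᵢ aᵢ` of `R ⊗ K`, `K` the rational function field. -/
noncomputable def genElt [Field F] [Ring R] [Algebra F R] [Fintype ι] (b : Module.Basis ι F R) :
    FractionRing (MvPolynomial ι F) ⊗[F] R :=
  ∑ i, algebraMap (MvPolynomial ι F) (FractionRing (MvPolynomial ι F)) (MvPolynomial.X i)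
    ⊗ₜ[F] b i

private lemma eval_aeval_poly [Field F] (g : ι → Polynomial F) (t : F) (p : MvPolynomial ι F) :
    Polynomial.eval t (MvPolynomial.aeval g p)
      = MvPolynomial.eval (fun i => Polynomial.eval t (g i)) p := by
  induction p using MvPolynomial.induction_on with
  | C a => simp
  | add p q hp hq => simp only [map_add, Polynomial.eval_add, hp, hq]
  | mul_X p i hp =>
      simp only [map_mul, MvPolynomial.aeval_X, Polynomial.eval_mul, MvPolynomial.eval_mul,
        MvPolynomial.eval_X, hp]

private lemma eval_aeval_mv [Field F] (g : ι → MvPolynomial ι F) (x : ι → F)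
    (p : MvPolynomial ι F) :
    MvPolynomial.eval x (MvPolynomial.aeval g p)
      = MvPolynomial.eval (fun i => MvPolynomial.eval x (g i)) p := by
  induction p using MvPolynomial.induction_on with
  | C a => simp
  | add p q hp hq => simp only [map_add, hp, hq]
  | mul_X p i hp =>
      simp only [map_mul, MvPolynomial.aeval_X, MvPolynomial.eval_mul, MvPolynomial.eval_X, hp]

/-- Every element of the Jacobson radical of a finite-dimensional algebra is nilpotent. -/
private lemma jac_nilpotent [Field F] [Ring R] [Algebra F R] [FiniteDimensional F R] {j : R}
    (hj : j ∈ Ideal.jacobson (⊥ : Ideal R)) : IsNilpotent j := by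
  have hart : IsArtinian R R := isArtinian_of_tower F inferInstance
  obtain ⟨n, hn⟩ := IsArtinian.monotone_stabilizes (R := R) (M := R)
    ⟨fun n => OrderDual.toDual (Ideal.span {j ^ n}), by
      intro m k hmk
      simp only [OrderDual.toDual_le_toDual]
      apply Ideal.span_le.mpr
      simp only [Set.singleton_subset_iff, SetLike.mem_coe]
      have : j ^ k = j ^ (k - m) * j ^ m := by rw [← pow_add]; congr 1; omega
      rw [this]
      exact Ideal.mul_mem_left _ _ (Ideal.subset_span rfl)⟩
  have hmem : j ^ n ∈ Ideal.span ({j ^ (n + 1)} : Set R) := by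
    have := hn (n + 1) (by omega)
    rw [show Ideal.span ({j ^ (n+1)} : Set R) = Ideal.span {j ^ n} from
      congrArg OrderDual.ofDual this.symm]
    exact Ideal.subset_span rfl
  obtain ⟨r, hr⟩ := Submodule.mem_span_singleton.mp hmem
  rw [smul_eq_mul] at hr
  have hlinv : ∃ s : R, s * (1 - r * j) = 1 := by
    by_contra hcon
    push_neg at hcon
    have hne : Ideal.span ({1 - r * j} : Set R) ≠ ⊤ := by
      intro htop
      have : (1 : R) ∈ Ideal.span ({1 - r * j} : Set R) := htop ▸ Submodule.mem_top
      obtain ⟨s, hs⟩ := Submodule.mem_span_singleton.mp this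
      exact hcon s (by rwa [smul_eq_mul] at hs)
    obtain ⟨M, hM, hle⟩ := Ideal.exists_le_maximal _ hne
    have hjM : j ∈ M := by
      rw [Ideal.jacobson] at hj
      exact Ideal.mem_sInf.mp hj ⟨bot_le, hM⟩
    have h1M : (1 : R) ∈ M := by
      have h2 : (1 : R) - r * j ∈ M := hle (Ideal.subset_span rfl)
      have h3 : r * j ∈ M := M.smul_mem r hjM
      simpa using M.add_mem h2 h3
    exact hM.ne_top (Ideal.eq_top_iff_one M |>.mpr h1M)
  obtain ⟨s, hs⟩ := hlinv
  refine ⟨n, ?_⟩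
  have hzero : (1 - r * j) * j ^ n = 0 := by
    rw [sub_mul, one_mul, mul_assoc, ← pow_succ', hr, sub_self]
  calc j ^ n = (s * (1 - r * j)) * j ^ n := by rw [hs, one_mul]
    _ = s * ((1 - r * j) * j ^ n) := by rw [mul_assoc]
    _ = 0 := by rw [hzero, mul_zero]

/-- A multiplicative polynomial map with `f 1 = 1` takes the value `1` on
`1 + (nilpotent)`. -/
private lemma polyFun_one_add_nilpotent [Field F] [Infinite F] [Ring R] [Algebra F R]
    [Fintype ι] (b : Module.Basis ι F R) (p : MvPolynomial ι F)
    (hmul : ∀ x y : R, polyFun b p (x * y) = polyFun b p x * polyFun b p y)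
    (h1 : polyFun b p 1 = 1) {j : R} (hj : IsNilpotent j) :
    polyFun b p (1 + j) = 1 := by
  classical
  obtain ⟨n, hn⟩ := hj
  set Q : Polynomial F := MvPolynomial.aeval
      (fun i => Polynomial.C (b.repr 1 i) + Polynomial.C (b.repr j i) * Polynomial.X) p with hQdef
  set S : Polynomial F := MvPolynomial.aeval
      (fun i => ∑ k ∈ Finset.range n, Polynomial.C (b.repr (j ^ k) i) * (- Polynomial.X) ^ k) p
    with hSdef
  have hQ : ∀ t : F, Q.eval t = polyFun b p (1 + t • j) := by
    intro t
    rw [hQdef, eval_aeval_poly]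
    unfold polyFun
    have harg : (fun i => Polynomial.eval t
        (Polynomial.C (b.repr 1 i) + Polynomial.C (b.repr j i) * Polynomial.X))
        = fun i => b.repr (1 + t • j) i := by
      funext i
      simp only [Polynomial.eval_add, Polynomial.eval_mul, Polynomial.eval_C, Polynomial.eval_X,
        map_add, map_smul, Finsupp.add_apply, Finsupp.smul_apply, smul_eq_mul]
      rw [mul_comm]
    rw [harg]
  have hS : ∀ t : F, S.eval t = polyFun b p (∑ k ∈ Finset.range n, (-(t • j)) ^ k) := by
    intro t
    rw [hSdef, eval_aeval_poly]
    unfold polyFun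
    have hterm : ∀ k : ℕ, (-(t • j)) ^ k = (-t) ^ k • j ^ k := by
      intro k; rw [← neg_smul, smul_pow]
    have harg : (fun i => Polynomial.eval t
        (∑ k ∈ Finset.range n, Polynomial.C (b.repr (j ^ k) i) * (- Polynomial.X) ^ k))
        = fun i => b.repr (∑ k ∈ Finset.range n, (-(t • j)) ^ k) i := by
      funext i
      simp only [hterm, map_sum, Finsupp.coe_finset_sum, Finset.sum_apply, map_smul,
        Finsupp.smul_apply, smul_eq_mul, Polynomial.eval_finset_sum, Polynomial.eval_mul,
        Polynomial.eval_C, Polynomial.eval_pow, Polynomial.eval_neg, Polynomial.eval_X]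
      exact Finset.sum_congr rfl fun k _ => mul_comm _ _
    rw [harg]
  have hprod : ∀ t : F, (1 + t • j) * (∑ k ∈ Finset.range n, (-(t • j)) ^ k) = 1 := by
    intro t
    have h := mul_neg_geom_sum (-(t • j)) n
    rw [sub_neg_eq_add] at h
    rw [h, ← neg_smul, smul_pow, hn, smul_zero, sub_zero]
  have hQS : Q * S = 1 := by
    apply Polynomial.funext
    intro t
    rw [Polynomial.eval_mul, hQ, hS, ← hmul, hprod, h1, Polynomial.eval_one]
  obtain ⟨c, _, hCQ⟩ := Polynomial.isUnit_iff.mp (IsUnit.of_mul_eq_one _ hQS)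
  have h10 : polyFun b p (1 + j) = c := by
    have := hQ 1
    rw [one_smul] at this
    rw [← this, ← hCQ, Polynomial.eval_C]
  have h00 : (1 : F) = c := by
    have := hQ 0
    rw [zero_smul, add_zero, h1] at this
    rw [← this, ← hCQ, Polynomial.eval_C]
  rw [h10, ← h00]

/-- A multiplicative polynomial map on a finite-dimensional algebra over an infinite field
factors through `R / J`, `J` the Jacobson radical: `f (a + j) = f a` for all `j ∈ J`. -/
theorem stmt15 [Field F] [Infinite F] [Ring R] [Algebra F R] [FiniteDimensional F R]
    [Fintype ι] (b : Module.Basis ι F R) (p : MvPolynomial ι F)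
    (hmul : ∀ x y : R, polyFun b p (x * y) = polyFun b p x * polyFun b p y) :
    ∀ a j : R, j ∈ Ideal.jacobson (⊥ : Ideal R) → polyFun b p (a + j) = polyFun b p a := by
  classical
  intro a j hj
  by_cases h1 : polyFun b p 1 = 1
  · -- the matrix of left multiplication, as a linear function of the element
    set L : R →ₗ[F] Matrix ι ι F :=
      (LinearMap.toMatrix b b).toLinearMap ∘ₗ (LinearMap.mul F R) with hLdef
    have hL : ∀ x : R, L x = ∑ i, b.repr x i • L (b i) := by
      intro x
      conv_lhs => rw [← b.sum_repr x]
      rw [map_sum]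
      exact Finset.sum_congr rfl fun i _ => by rw [map_smul]
    have hunit : ∀ x : R, (L x).det ≠ 0 → ∃ c : R, x * c = 1 ∧ c * x = 1 := by
      intro x hx
      have hdet : LinearMap.det (LinearMap.mul F R x) ≠ 0 := by
        rw [← LinearMap.det_toMatrix b]
        exact hx
      have hbij : Function.Bijective (LinearMap.mul F R x) :=
        (LinearMap.equivOfDetNeZero _ hdet).bijective
      obtain ⟨c, hc⟩ := hbij.2 1
      have hc1 : x * c = 1 := hc
      refine ⟨c, hc1, ?_⟩
      have heq : (LinearMap.mul F R x) (c * x) = (LinearMap.mul F R x) 1 := by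
        show x * (c * x) = x * 1
        rw [← mul_assoc, hc1, one_mul, mul_one]
      exact hbij.1 heq
    -- the generic determinant polynomial
    set N : Matrix ι ι (MvPolynomial ι F) :=
      ∑ i, (MvPolynomial.X i : MvPolynomial ι F) • (L (b i)).map (MvPolynomial.C : F →+* MvPolynomial ι F) with hNdef
    set d : MvPolynomial ι F := N.det with hddef
    have hdev : ∀ x : R, MvPolynomial.eval (fun i => b.repr x i) d = (L x).det := by
      intro x
      rw [hddef, RingHom.map_det, hL x]
      congr 1
      ext k l
      simp [hNdef, Matrix.map_apply, Matrix.sum_apply, Matrix.smul_apply, smul_eq_mul]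
    have hd1 : MvPolynomial.eval (fun i => b.repr (1 : R) i) d = 1 := by
      rw [hdev 1]
      have hid : LinearMap.mul F R (1 : R) = LinearMap.id := by
        ext y; simp
      show (LinearMap.toMatrix b b (LinearMap.mul F R (1 : R))).det = 1
      rw [hid, LinearMap.toMatrix_id, Matrix.det_one]
    have hdne : d ≠ 0 := by
      intro h
      rw [h, map_zero] at hd1
      exact zero_ne_one hd1
    -- the difference polynomial
    set E : MvPolynomial ι F :=
      MvPolynomial.aeval (fun i => MvPolynomial.X i + MvPolynomial.C (b.repr j i)) p - p
      with hEdef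
    have hEev : ∀ x : R,
        MvPolynomial.eval (fun i => b.repr x i) E = polyFun b p (x + j) - polyFun b p x := by
      intro x
      rw [hEdef, map_sub, eval_aeval_mv]
      unfold polyFun
      have harg : (fun i => MvPolynomial.eval (fun i => b.repr x i)
          (MvPolynomial.X i + MvPolynomial.C (b.repr j i)))
          = fun i => b.repr (x + j) i := by
        funext i
        simp [map_add, Finsupp.add_apply]
      rw [harg]
    have hkey : ∀ x : R, (∃ c, x * c = 1 ∧ c * x = 1) →
        polyFun b p (x + j) = polyFun b p x := by
      rintro x ⟨c, hc1, _⟩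
      have hcj : c * j ∈ Ideal.jacobson (⊥ : Ideal R) := by
        have := (Ideal.jacobson (⊥ : Ideal R)).smul_mem c hj
        rwa [smul_eq_mul] at this
      have hx : x + j = x * (1 + c * j) := by
        rw [mul_add, mul_one, ← mul_assoc, hc1, one_mul]
      rw [hx, hmul, polyFun_one_add_nilpotent b p hmul h1 (jac_nilpotent (F := F) hcj), mul_one]
    have hEd : E * d = 0 := by
      apply MvPolynomial.funext
      intro y
      rw [map_mul, map_zero]
      set x : R := b.equivFun.symm y with hxdef
      have hcoord : (fun i => b.repr x i) = y := by
        funext i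
        rw [hxdef, ← Module.Basis.equivFun_apply, LinearEquiv.apply_symm_apply]
      by_cases hdx : MvPolynomial.eval y d = 0
      · rw [hdx, mul_zero]
      · have hdx' : (L x).det ≠ 0 := by
          rw [← hdev x, hcoord]; exact hdx
        have hfx := hkey x (hunit x hdx')
        have hE0 : MvPolynomial.eval y E = 0 := by
          rw [← hcoord, hEev x, hfx, sub_self]
        rw [hE0, zero_mul]
    have hEzero : E = 0 := by
      rcases mul_eq_zero.mp hEd with h | h
      · exact h
      · exact absurd h hdne
    have hfin := hEev a
    rw [hEzero, map_zero] at hfin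
    exact sub_eq_zero.mp hfin.symm
  · -- if `f 1 ≠ 1` then `f ≡ 0`
    have hz : ∀ x : R, polyFun b p x = 0 := by
      intro x
      have hx1 := hmul x 1
      rw [mul_one] at hx1
      by_contra hx
      exact h1 (mul_left_cancel₀ hx (by rw [← hx1, mul_one])).symm
    rw [hz, hz]
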